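/- Let (X,d) be a metric space with infinitely remote point ω, o ∈ X, r > 0, and φ : X → X a bijective Möbius map with φ(ω) = o, φ(o) = ω, fixing the sphere S = {y : d(o,y) = r} pointwise (S nonempty). Then for all x, y ∈ X distinct from o and ω, d(φ(x), φ(y)) = r² · d(x,y) / (d(o,x) · d(o,y)). -/
import Mathlib


/-- Projective equality of triples of reals, i.e. equality in `ℝP²`. -/
def ProjEq (a b : ℝ × ℝ × ℝ) : Prop :=
  ∃ c : ℝ, 0 < c ∧ b.1 = c * a.1 ∧ b.2.1 = c * a.2.1 ∧ b.2.2 = c * a.2.2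

/-- A quadruple is admissible if no entry occurs three or four times. -/
def Admissible {X : Type*} (x y z u : X) : Prop :=
  ¬ ((x = y ∧ y = z) ∨ (x = y ∧ y = u) ∨ (x = z ∧ z = u) ∨ (y = z ∧ z = u))

open scoped Classical in
/-- The cross-ratio triple of a quadruple with respect to an extended metric `d` with
infinitely remote point `ω`, with the standard conventions when `ω` occurs among the
entries: e.g. `crt(x,y,z,ω) = (d(x,y) : d(x,z) : d(y,z))` and `crt(x,y,ω,ω) = (0:1:1)`. -/
noncomputable def crt {X : Type*} (d : X → X → ℝ) (ω x y z u : X) : ℝ × ℝ × ℝ :=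
  if x = ω then
    (if y = ω then ((0 : ℝ), 1, 1) else if z = ω then ((1 : ℝ), 0, 1)
      else if u = ω then ((1 : ℝ), 1, 0) else (d z u, d y u, d y z))
  else if y = ω then
    (if z = ω then ((1 : ℝ), 1, 0) else if u = ω then ((1 : ℝ), 0, 1)
      else (d z u, d x z, d x u))
  else if z = ω then
    (if u = ω then ((0 : ℝ), 1, 1) else (d x y, d y u, d x u))
  else if u = ω then (d x y, d x z, d y z)
  else (d x y * d z u, d x z * d y u, d x u * d y z)


/-- a bijective Möbius map `φ` swapping `o` and the infinitely remote point
`ω` and fixing the nonempty sphere `S = {y | d(o,y) = r}` pointwise satisfies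
`d(φ(x),φ(y)) = r² d(x,y)/(d(o,x)d(o,y))` for all `x, y ∉ {o, ω}`. -/
theorem strong_inversion_distance_formula
    {X : Type*} (ω o : X) (hoω : o ≠ ω) (d : X → X → ℝ) (r : ℝ) (hr : 0 < r)
    (hd_self : ∀ x, d x x = 0)
    (hd_comm : ∀ x y, x ≠ ω → y ≠ ω → d x y = d y x)
    (hd_pos : ∀ x y, x ≠ ω → y ≠ ω → x ≠ y → 0 < d x y)
    (hd_tri : ∀ x y z, x ≠ ω → y ≠ ω → z ≠ ω → d x z ≤ d x y + d y z)
    (φ : X → X) (hbij : Function.Bijective φ)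
    (hmob : ∀ x y z u : X, Admissible x y z u →
      ProjEq (crt d ω x y z u) (crt d ω (φ x) (φ y) (φ z) (φ u)))
    (hφω : φ ω = o) (hφo : φ o = ω)
    (hfix : ∀ y, y ≠ ω → d o y = r → φ y = y)
    (hS : ∃ y, y ≠ ω ∧ d o y = r) :
    ∀ x y, x ≠ o → x ≠ ω → y ≠ o → y ≠ ω →
      d (φ x) (φ y) = r ^ 2 * d x y / (d o x * d o y) := by
  obtain ⟨s, hsω, hsr⟩ := hS
  have hso : s ≠ o := by
    rintro rfl
    rw [hd_self] at hsr
    exact hr.ne hsr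
  have hφs : φ s = s := hfix s hsω hsr
  have hinj := hbij.injective
  have key : ∀ x, x ≠ o → x ≠ ω → d o (φ x) * d o x = r ^ 2 := by
    intro x hxo hxω
    have hφxω : φ x ≠ ω := fun h => hxo (hinj (h.trans hφo.symm))
    have hadm : Admissible o x s ω := by
      simp only [Admissible, not_or]
      refine ⟨?_, ?_, ?_, ?_⟩ <;> rintro ⟨h1, h2⟩
      · exact hxo h1.symm
      · exact hxo h1.symm
      · exact hsω h2
      · exact hsω h2
    have e1 : crt d ω o x s ω = (d o x, d o s, d x s) := by
      simp [crt, hoω, hxω, hsω]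
    have e2 : crt d ω ω (φ x) s o = (d s o, d (φ x) o, d (φ x) s) := by
      simp [crt, hφxω, hsω, hoω]
    obtain ⟨c, hc, h1, h2, h3⟩ := hmob o x s ω hadm
    rw [hφo, hφω, hφs, e1, e2] at *
    simp only at h1 h2 h3
    -- h1 : d s o = c * d o x, h2 : d (φ x) o = c * d o s
    have hso' : d s o = r := (hd_comm s o hsω hoω).trans hsr
    have hc1 : c * d o x = r := hso' ▸ h1.symm
    have : d (φ x) o = c * r := by rw [h2, hsr]
    rw [hd_comm o (φ x) hoω hφxω, this]
    nlinarith [hc1]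
  intro x y hxo hxω hyo hyω
  have hφxω : φ x ≠ ω := fun h => hxo (hinj (h.trans hφo.symm))
  have hφyω : φ y ≠ ω := fun h => hyo (hinj (h.trans hφo.symm))
  have hadm : Admissible x y o ω := by
    simp only [Admissible, not_or]
    refine ⟨?_, ?_, ?_, ?_⟩ <;> rintro ⟨h1, h2⟩
    · exact hyo h2
    · exact hyω h2
    · exact hoω h2
    · exact hoω h2
  have e1 : crt d ω x y o ω = (d x y, d x o, d y o) := by
    simp [crt, hxω, hyω, hoω]
  have e2 : crt d ω (φ x) (φ y) ω o = (d (φ x) (φ y), d (φ y) o, d (φ x) o) := by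
    simp [crt, hφxω, hφyω, hoω]
  obtain ⟨c, hc, h1, h2, h3⟩ := hmob x y o ω hadm
  rw [hφo, hφω, e1, e2] at *
  simp only at h1 h2 h3
  -- h1 : d (φ x) (φ y) = c * d x y, h2 : d (φ y) o = c * d x o
  have hpx : 0 < d o x := hd_pos o x hoω hxω (fun h => hxo h.symm)
  have hpy : 0 < d o y := hd_pos o y hoω hyω (fun h => hyo h.symm)
  have hkey := key y hyo hyω
  have hc2 : c * (d o x * d o y) = r ^ 2 := by
    have := h2
    rw [hd_comm (φ y) o hφyω hoω, hd_comm x o hxω hoω] at this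
    nlinarith [hkey, this]
  rw [h1, eq_div_iff (by positivity : d o x * d o y ≠ 0)]
  linear_combination d x y * hc2
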